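/- Let p : (X,T) → (Y,S) be a proximal extension between Cantor minimal systems. Then for every n ≥ 1, every continuous T×⋯×T-invariant integer-valued function on Xⁿ_p = {(x₁,…,xₙ) : p(x₁)=⋯=p(xₙ)} is constant. -/

import Mathlib

variable {X Y : Type*} [TopologicalSpace X] [TopologicalSpace Y]

/-- The `n`-th relative cartesian power `Xⁿ_p` of `X` with respect to `p : X → Y`. -/
abbrev FiberPow (p : X → Y) (n : ℕ) : Type _ :=
  {v : Fin n → X // ∀ i j, p (v i) = p (v j)}

/-- if `p : (X,T) → (Y,S)` is a proximal extension between Cantor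
minimal systems, then every continuous `T×⋯×T`-invariant integer-valued function
on `Xⁿ_p` is constant. -/
theorem invariant_const_of_proximal {X Y : Type*}
    [MetricSpace X] [CompactSpace X]
    [TotallyDisconnectedSpace X] [PerfectSpace X] [Nonempty X]
    [MetricSpace Y] [CompactSpace Y]
    [TotallyDisconnectedSpace Y] [PerfectSpace Y] [Nonempty Y]
    (T : X ≃ₜ X) (S : Y ≃ₜ Y)
    (hminX : ∀ x : X, Dense (Set.range fun n : ℤ => (T.toEquiv ^ n) x))
    (hminY : ∀ y : Y, Dense (Set.range fun n : ℤ => (S.toEquiv ^ n) y))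
    (p : C(X, Y)) (hps : Function.Surjective p)
    (hfac : ∀ x : X, p (T x) = S (p x))
    (hprox : ∀ x x' : X, p x = p x' → ∀ δ : ℝ, 0 < δ →
      ∃ k : ℕ, 0 < k ∧ dist ((T.toEquiv ^ k) x) ((T.toEquiv ^ k) x') < δ)
    (n : ℕ) (hn : 1 ≤ n) (f : C(FiberPow (⇑p) n, ℤ))
    (hinv : ∀ v : FiberPow (⇑p) n,
      f ⟨fun i => T (v.1 i), by intro i j; rw [hfac, hfac, v.2 i j]⟩ = f v) :
    ∀ v w : FiberPow (⇑p) n, f v = f w := by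
  classical
  -- compactness of the fiber power
  haveI : CompactSpace (FiberPow (⇑p) n) := by
    have hcl : IsClosed {v : Fin n → X | ∀ i j, p (v i) = p (v j)} := by
      have : {v : Fin n → X | ∀ i j, p (v i) = p (v j)}
          = ⋂ i, ⋂ j, {v : Fin n → X | p (v i) = p (v j)} := by
        ext v; simp
      rw [this]
      exact isClosed_iInter fun i => isClosed_iInter fun j =>
        isClosed_eq (p.continuous.comp (continuous_apply i))
          (p.continuous.comp (continuous_apply j))
    exact isCompact_iff_compactSpace.mp hcl.isCompact
  -- uniform continuity : a δ such that close points have equal f-values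
  have huc : UniformContinuous f := CompactSpace.uniformContinuous_of_continuous f.continuous
  obtain ⟨δ, hδ, hδf⟩ := (Metric.uniformContinuous_iff.mp huc) 1 one_pos
  have heq : ∀ a b : FiberPow (⇑p) n, dist a b < δ → f a = f b := by
    intro a b hab
    have h1 := hδf hab
    rw [Int.dist_eq] at h1
    rw [← Int.cast_sub, ← Int.cast_abs] at h1
    have h2 : |f a - f b| < (1 : ℤ) := by exact_mod_cast h1
    rw [abs_lt] at h2
    omega
  -- invariance under powers of T (on X, for the diagonal function, etc.)
  have hTcoe : ∀ x : X, T.toEquiv x = T x := fun _ => rfl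
  have hfacN : ∀ (k : ℕ) (x : X), p ((T.toEquiv ^ k) x) = (S.toEquiv ^ k) (p x) := by
    intro k
    induction k with
    | zero => intro x; simp
    | succ k ih =>
      intro x
      rw [pow_succ, pow_succ, Equiv.Perm.mul_apply, Equiv.Perm.mul_apply, hTcoe x,
        ih (T x), hfac x]
      rfl
  -- the map applying T^k coordinatewise
  set Tk : ℕ → FiberPow (⇑p) n → FiberPow (⇑p) n := fun k v =>
    ⟨fun i => (T.toEquiv ^ k) (v.1 i), by
      intro i j; rw [hfacN, hfacN, v.2 i j]⟩ with hTk
  have hinvN : ∀ (k : ℕ) (v : FiberPow (⇑p) n), f (Tk k v) = f v := by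
    intro k
    induction k with
    | zero =>
      intro v
      have h0 : Tk 0 v = v := by
        apply Subtype.ext; funext i; simp [hTk]
      rw [h0]
    | succ k ih =>
      intro v
      have h1 : Tk (k + 1) v = Tk k ⟨fun i => T (v.1 i), by
          intro i j; rw [hfac, hfac, v.2 i j]⟩ := by
        apply Subtype.ext; funext i
        simp only [hTk]
        rw [pow_succ, Equiv.Perm.mul_apply, hTcoe]
      rw [h1, ih, hinv]
  -- the diagonal function g and its constancy
  set x₀ : X := Classical.arbitrary X with hx₀
  set g : X → ℤ := fun x => f ⟨fun _ => x, fun _ _ => rfl⟩ with hg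
  have hgc : Continuous g :=
    f.continuous.comp (Continuous.subtype_mk (continuous_pi fun _ => continuous_id) _)
  have hginv : ∀ x : X, g (T x) = g x := by
    intro x
    have := hinv ⟨fun _ => x, fun _ _ => rfl⟩
    simpa [hg] using this
  have hginv_symm : ∀ x : X, g (T.symm x) = g x := by
    intro x
    have h := hginv (T.symm x)
    rw [T.apply_symm_apply] at h
    exact h.symm
  have hginvZ : ∀ (m : ℤ) (x : X), g ((T.toEquiv ^ m) x) = g x := by
    intro m
    induction m using Int.induction_on with
    | zero => intro x; simp
    | succ m ih =>
      intro x
      rw [zpow_add_one, Equiv.Perm.mul_apply, ih, hTcoe, hginv]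
    | pred m ih =>
      intro x
      rw [zpow_sub_one, Equiv.Perm.mul_apply, ih]
      have : (T.toEquiv⁻¹ : Equiv.Perm X) x = T.symm x := rfl
      rw [this, hginv_symm]
  have hgconst : ∀ x : X, g x = g x₀ := by
    intro x
    have hA : IsClosed {z : X | g z = g x₀} := isClosed_eq hgc continuous_const
    have hsub : Set.range (fun m : ℤ => (T.toEquiv ^ m) x₀) ⊆ {z : X | g z = g x₀} := by
      rintro _ ⟨m, rfl⟩
      exact hginvZ m x₀
    have h2 : closure (Set.range fun m : ℤ => (T.toEquiv ^ m) x₀) ⊆ {z : X | g z = g x₀} :=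
      hA.closure_subset_iff.mpr hsub
    exact h2 (by rw [(hminX x₀).closure_eq]; trivial)
  -- the base index
  set i0 : Fin n := ⟨0, hn⟩ with hi0
  set c : ℤ := g x₀ with hc
  have hdiag : ∀ x : X, f ⟨fun _ => x, fun _ _ => rfl⟩ = c := fun x => hgconst x
  -- main induction : merging coordinates
  have main : ∀ (m : ℕ) (v : FiberPow (⇑p) n),
      (Finset.univ.filter fun j => v.1 j ≠ v.1 i0).card ≤ m → f v = c := by
    intro m
    induction m with
    | zero =>
      intro v hv
      have hall : ∀ j, v.1 j = v.1 i0 := by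
        intro j
        by_contra hj
        have : j ∈ Finset.univ.filter fun j => v.1 j ≠ v.1 i0 := by
          simp [hj]
        have := Finset.card_pos.mpr ⟨j, this⟩
        omega
      have : v = ⟨fun _ => v.1 i0, fun _ _ => rfl⟩ := by
        apply Subtype.ext; funext j; exact hall j
      rw [this, hdiag]
    | succ m ih =>
      intro v hv
      by_cases hle : (Finset.univ.filter fun j => v.1 j ≠ v.1 i0).card ≤ m
      · exact ih v hle
      · have hpos : 0 < (Finset.univ.filter fun j => v.1 j ≠ v.1 i0).card := by omega
        obtain ⟨i, hi⟩ := Finset.card_pos.mp hpos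
        simp only [Finset.mem_filter, Finset.mem_univ, true_and] at hi
        obtain ⟨k, hk, hdist⟩ := hprox (v.1 i0) (v.1 i) (v.2 i0 i) δ hδ
        set w : FiberPow (⇑p) n :=
          ⟨fun j => if j = i then (T.toEquiv ^ k) (v.1 i0) else (T.toEquiv ^ k) (v.1 j), by
            intro a b
            have hval : ∀ j, p (if j = i then (T.toEquiv ^ k) (v.1 i0)
                else (T.toEquiv ^ k) (v.1 j)) = (S.toEquiv ^ k) (p (v.1 i0)) := by
              intro j
              by_cases hj : j = i <;> simp [hj, hfacN, v.2 j i0]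
            rw [hval a, hval b]⟩ with hw
        have hclose : dist (Tk k v) w < δ := by
          rw [Subtype.dist_eq]
          rw [dist_pi_lt_iff hδ]
          intro j
          by_cases hj : j = i
          · subst hj
            simpa [hTk, hw, dist_comm] using hdist
          · simp [hTk, hw, hj, hδ]
        have h1 : f v = f w := by
          rw [← hinvN k v]
          exact heq _ _ hclose
        have hsubset : (Finset.univ.filter fun j => w.1 j ≠ w.1 i0)
            ⊆ (Finset.univ.filter fun j => v.1 j ≠ v.1 i0).erase i := by
          intro j hj
          simp only [Finset.mem_filter, Finset.mem_univ, true_and] at hj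
          have hii0 : i ≠ i0 := fun h => hi (by rw [h])
          have hji : j ≠ i := by
            intro h
            apply hj
            rw [h]
            show (if i = i then _ else _) = (if i0 = i then _ else _)
            rw [if_pos rfl, if_neg (Ne.symm hii0)]
          rw [Finset.mem_erase]
          refine ⟨hji, ?_⟩
          simp only [Finset.mem_filter, Finset.mem_univ, true_and]
          intro hjv
          apply hj
          show (if j = i then _ else _) = (if i0 = i then _ else _)
          rw [if_neg hji, if_neg (Ne.symm hii0), hjv]
        have hcard : (Finset.univ.filter fun j => w.1 j ≠ w.1 i0).card ≤ m := by
          have h2 := Finset.card_le_card hsubset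
          have h3 : i ∈ Finset.univ.filter fun j => v.1 j ≠ v.1 i0 := by simp [hi]
          rw [Finset.card_erase_of_mem h3] at h2
          omega
        rw [h1]
        exact ih w hcard
  intro v w
  have hv := main _ v le_rfl
  have hw := main _ w le_rfl
  rw [hv, hw]
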